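/- Let A, V ∈ ℝ^{m×n} with m ≤ n, full row rank, A Vᵀ nonsingular, and let Z ∈ ℝ^{n×m} have orthonormal columns spanning range(Vᵀ). Let x̂ ∈ range(Vᵀ) solve A x̂ = b and let x_0 ∈ range(Vᵀ). If λ := λ_min(Zᵀ(VᵀDA + AᵀDV − AᵀSDA)Z) > 0, then the iterates of the randomized Kaczmarz method with mismatched adjoint satisfy E[‖x_{k+1} − x̂‖²] ≤ (1 − λ)·E[‖x_k − x̂‖²]. -/

import Mathlib

open Matrix Finset

noncomputable def enorm' {n : ℕ} (v : Fin n → ℝ) : ℝ := Real.sqrt (v ⬝ᵥ v)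

/-- Iterates of the randomized Kaczmarz method with mismatched adjoint along a given
sequence of chosen row indices `ω`. -/
noncomputable def rkmaIter {m n : ℕ} (A V : Matrix (Fin m) (Fin n) ℝ) (b : Fin m → ℝ)
    (x0 : Fin n → ℝ) : (k : ℕ) → (Fin k → Fin m) → (Fin n → ℝ)
  | 0, _ => x0
  | k + 1, ω =>
      let x := rkmaIter A V b x0 k (fun j => ω j.castSucc)
      let i := ω (Fin.last k)
      x - ((A i ⬝ᵥ x - b i) / (A i ⬝ᵥ V i)) • V i

lemma enorm'_sq {n : ℕ} (v : Fin n → ℝ) : enorm' v ^ 2 = v ⬝ᵥ v := by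
  exact Real.sq_sqrt (Finset.sum_nonneg fun i _ => mul_self_nonneg _)

lemma quad_lower {m : ℕ} (M : Matrix (Fin m) (Fin m) ℝ) (hM : M.IsHermitian)
    (lam : ℝ) (hlam : lam = ⨅ j, hM.eigenvalues j) (c : Fin m → ℝ) :
    lam * (c ⬝ᵥ c) ≤ c ⬝ᵥ M.mulVec c := by
  rcases Nat.eq_zero_or_pos m with hm | hm
  · subst hm
    simp [dotProduct]
  have : Nonempty (Fin m) := ⟨⟨0, hm⟩⟩
  have hle : ∀ j, lam ≤ hM.eigenvalues j := by
    intro j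
    rw [hlam]
    exact ciInf_le (Set.Finite.bddBelow (Set.finite_range _)) j
  have hps : (M - lam • 1).PosSemidef := by
    have hspec := hM.spectral_theorem
    set U : Matrix (Fin m) (Fin m) ℝ := (hM.eigenvectorUnitary : Matrix (Fin m) (Fin m) ℝ)
    have hU : U * star U = 1 := (Matrix.mem_unitaryGroup_iff).mp hM.eigenvectorUnitary.2
    have key : M - lam • 1 = U * (Matrix.diagonal (fun j => hM.eigenvalues j - lam)) * star U := by
      have h1 : Matrix.diagonal (fun j => hM.eigenvalues j - lam)
          = Matrix.diagonal (RCLike.ofReal ∘ hM.eigenvalues) - lam • 1 := by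
        rw [Matrix.smul_one_eq_diagonal, Matrix.diagonal_sub]
        rfl
      rw [h1, Matrix.mul_sub, Matrix.sub_mul, ← (hspec.trans (Unitary.conjStarAlgAut_apply _ _) :
        M = U * Matrix.diagonal (RCLike.ofReal ∘ hM.eigenvalues) * star U)]
      congr 1
      rw [Matrix.mul_smul, Matrix.smul_mul, mul_one, hU]
    rw [key]
    exact PosSemidef.mul_mul_conjTranspose_same
      (Matrix.posSemidef_diagonal_iff.2 fun j => sub_nonneg.2 (hle j)) U
  have h0 := hps.dotProduct_mulVec_nonneg c
  simp only [RCLike.re_to_real, star_trivial] at h0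
  have heq : c ⬝ᵥ (M - lam • 1).mulVec c = c ⬝ᵥ M.mulVec c - lam * (c ⬝ᵥ c) := by
    rw [Matrix.sub_mulVec, dotProduct_sub, Matrix.smul_mulVec, one_mulVec,
      dotProduct_smul]
    ring_nf
  linarith [heq ▸ h0]

lemma quad_eq {m n : ℕ} (W A : Matrix (Fin m) (Fin n) ℝ) (d : Fin m → ℝ) (e : Fin n → ℝ) :
    e ⬝ᵥ (Wᵀ * Matrix.diagonal d * A).mulVec e = ∑ i, d i * (W i ⬝ᵥ e) * (A i ⬝ᵥ e) := by
  rw [← Matrix.mulVec_mulVec, ← Matrix.mulVec_mulVec, Matrix.dotProduct_mulVec,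
    Matrix.vecMul_transpose]
  simp only [dotProduct, Matrix.mulVec]
  refine Finset.sum_congr rfl fun i _ => ?_
  have : ∑ x, Matrix.diagonal d i x * (∑ x_1, A x x_1 * e x_1)
      = d i * ∑ x_1, A i x_1 * e x_1 := by
    rw [Finset.sum_eq_single i]
    · simp
    · intro j _ hj; simp [Matrix.diagonal_apply_ne' d hj]
    · simp
  rw [this]; ring

/-- One-step expectation bound. -/
lemma step_bound {m n : ℕ} (A V : Matrix (Fin m) (Fin n) ℝ)
    (p : Fin m → ℝ) (hps : ∑ i, p i = 1)
    (hav : ∀ i, 0 < A i ⬝ᵥ V i)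
    (D S : Matrix (Fin m) (Fin m) ℝ)
    (hD : D = Matrix.diagonal (fun i => p i / (A i ⬝ᵥ V i)))
    (hS : S = Matrix.diagonal (fun i => (enorm' (V i)) ^ 2 / (A i ⬝ᵥ V i)))
    (lam : ℝ) (e : Fin n → ℝ)
    (hquad : lam * (e ⬝ᵥ e) ≤ e ⬝ᵥ (Vᵀ * D * A + Aᵀ * D * V - Aᵀ * S * D * A).mulVec e) :
    ∑ i, p i * ((e - ((A i ⬝ᵥ e) / (A i ⬝ᵥ V i)) • V i) ⬝ᵥ
        (e - ((A i ⬝ᵥ e) / (A i ⬝ᵥ V i)) • V i))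
      ≤ (1 - lam) * (e ⬝ᵥ e) := by
  set d : Fin m → ℝ := fun i => p i / (A i ⬝ᵥ V i) with hd
  set s : Fin m → ℝ := fun i => (enorm' (V i)) ^ 2 / (A i ⬝ᵥ V i) with hs
  have hM : e ⬝ᵥ (Vᵀ * D * A + Aᵀ * D * V - Aᵀ * S * D * A).mulVec e
      = ∑ i, (2 * d i * (V i ⬝ᵥ e) * (A i ⬝ᵥ e) - s i * d i * (A i ⬝ᵥ e) ^ 2) := by
    have h3 : Aᵀ * S * D * A = Aᵀ * Matrix.diagonal (fun i => s i * d i) * A := by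
      rw [hS, hD, Matrix.mul_assoc Aᵀ, Matrix.diagonal_mul_diagonal]
    rw [h3, hD, Matrix.sub_mulVec, Matrix.add_mulVec, dotProduct_sub, dotProduct_add]
    rw [quad_eq V A d e, quad_eq A V d e, quad_eq A A _ e]
    rw [← Finset.sum_add_distrib, ← Finset.sum_sub_distrib]
    refine Finset.sum_congr rfl fun i _ => ?_
    ring
  have hsum : ∑ i, p i * ((e - ((A i ⬝ᵥ e) / (A i ⬝ᵥ V i)) • V i) ⬝ᵥ
        (e - ((A i ⬝ᵥ e) / (A i ⬝ᵥ V i)) • V i))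
      = e ⬝ᵥ e - ∑ i, (2 * d i * (V i ⬝ᵥ e) * (A i ⬝ᵥ e) - s i * d i * (A i ⬝ᵥ e) ^ 2) := by
    have expand : ∀ i, p i * ((e - ((A i ⬝ᵥ e) / (A i ⬝ᵥ V i)) • V i) ⬝ᵥ
          (e - ((A i ⬝ᵥ e) / (A i ⬝ᵥ V i)) • V i))
        = p i * (e ⬝ᵥ e)
          - (2 * d i * (V i ⬝ᵥ e) * (A i ⬝ᵥ e) - s i * d i * (A i ⬝ᵥ e) ^ 2) := by
      intro i
      have hne : (A i ⬝ᵥ V i) ≠ 0 := ne_of_gt (hav i)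
      have hvv : enorm' (V i) ^ 2 = V i ⬝ᵥ V i := enorm'_sq _
      rw [dotProduct_sub, sub_dotProduct, sub_dotProduct, dotProduct_smul, smul_dotProduct,
        smul_dotProduct, dotProduct_smul, dotProduct_comm (V i) e]
      simp only [hd, hs, hvv, smul_eq_mul]
      field_simp
      ring
    rw [Finset.sum_congr rfl fun i _ => expand i, Finset.sum_sub_distrib,
      ← Finset.sum_mul, hps, one_mul]
  rw [hsum, ← hM]
  nlinarith [hquad]

theorem rkma_underdetermined_contraction {m n : ℕ} (hmn : m ≤ n)
    (A V : Matrix (Fin m) (Fin n) ℝ)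
    (hA : A.rank = m) (hV : V.rank = m) (hAVt : IsUnit (A * Vᵀ))
    (p : Fin m → ℝ) (hp : ∀ i, 0 < p i) (hps : ∑ i, p i = 1)
    (hav : ∀ i, 0 < A i ⬝ᵥ V i)
    (D S : Matrix (Fin m) (Fin m) ℝ)
    (hD : D = Matrix.diagonal (fun i => p i / (A i ⬝ᵥ V i)))
    (hS : S = Matrix.diagonal (fun i => (enorm' (V i)) ^ 2 / (A i ⬝ᵥ V i)))
    (Z : Matrix (Fin n) (Fin m) ℝ) (hZortho : Zᵀ * Z = 1)
    (hZrange : ∀ y : Fin n → ℝ,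
      (∃ c : Fin m → ℝ, y = Vᵀ.mulVec c) ↔ (∃ c : Fin m → ℝ, y = Z.mulVec c))
    (b : Fin m → ℝ) (xhat : Fin n → ℝ) (hb : A.mulVec xhat = b)
    (hxhatrange : ∃ c : Fin m → ℝ, xhat = Vᵀ.mulVec c)
    (x0 : Fin n → ℝ) (hx0 : ∃ c : Fin m → ℝ, x0 = Vᵀ.mulVec c)
    (hM : (Zᵀ * (Vᵀ * D * A + Aᵀ * D * V - Aᵀ * S * D * A) * Z).IsHermitian)
    (lam : ℝ) (hlam : lam = ⨅ j, hM.eigenvalues j) (hlampos : 0 < lam) :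
    ∀ k : ℕ,
      ∑ ω : Fin (k + 1) → Fin m, (∏ j, p (ω j)) *
          (enorm' (rkmaIter A V b x0 (k + 1) ω - xhat)) ^ 2
        ≤ (1 - lam) *
          ∑ ω : Fin k → Fin m, (∏ j, p (ω j)) *
            (enorm' (rkmaIter A V b x0 k ω - xhat)) ^ 2 := by
  intro k
  -- error vectors stay in range(Vᵀ)
  have hrange : ∀ (k : ℕ) (ω : Fin k → Fin m),
      ∃ c : Fin m → ℝ, rkmaIter A V b x0 k ω - xhat = Vᵀ.mulVec c := by
    intro k
    induction k with
    | zero =>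
      intro ω
      obtain ⟨c0, hc0⟩ := hx0
      obtain ⟨ch, hch⟩ := hxhatrange
      exact ⟨c0 - ch, by rw [rkmaIter, hc0, hch, Matrix.mulVec_sub]⟩
    | succ k ih =>
      intro ω
      obtain ⟨c, hc⟩ := ih (fun j => ω j.castSucc)
      set x := rkmaIter A V b x0 k (fun j => ω j.castSucc) with hx
      set i := ω (Fin.last k)
      refine ⟨c - ((A i ⬝ᵥ x - b i) / (A i ⬝ᵥ V i)) • (Pi.single i 1 : Fin m → ℝ), ?_⟩
      show x - ((A i ⬝ᵥ x - b i) / (A i ⬝ᵥ V i)) • V i - xhat = _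
      rw [Matrix.mulVec_sub, ← hc, Matrix.mulVec_smul]
      have hVi : Vᵀ.mulVec (Pi.single i 1) = V i := by
        ext j; simp [Matrix.mulVec_single]
      rw [hVi]
      abel
  -- quadratic bound for vectors in range(Z)
  have hquad : ∀ e : Fin n → ℝ, (∃ c, e = Z.mulVec c) →
      lam * (e ⬝ᵥ e) ≤ e ⬝ᵥ (Vᵀ * D * A + Aᵀ * D * V - Aᵀ * S * D * A).mulVec e := by
    rintro e ⟨c, rfl⟩
    have h1 : Z.mulVec c ⬝ᵥ Z.mulVec c = c ⬝ᵥ c := by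
      rw [dotProduct_mulVec, ← Matrix.mulVec_transpose, Matrix.mulVec_mulVec, hZortho,
        Matrix.one_mulVec]
    have h2 : Z.mulVec c ⬝ᵥ (Vᵀ * D * A + Aᵀ * D * V - Aᵀ * S * D * A).mulVec (Z.mulVec c)
        = c ⬝ᵥ (Zᵀ * (Vᵀ * D * A + Aᵀ * D * V - Aᵀ * S * D * A) * Z).mulVec c := by
      conv_rhs => rw [← Matrix.mulVec_mulVec, ← Matrix.mulVec_mulVec,
        Matrix.dotProduct_mulVec c, Matrix.vecMul_transpose]
    rw [h1, h2]
    exact quad_lower _ hM lam hlam c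
  -- per-ω one-step bound
  have hstep : ∀ ω : Fin k → Fin m,
      ∑ i, p i * (enorm' (rkmaIter A V b x0 (k + 1) (Fin.snoc ω i) - xhat)) ^ 2
        ≤ (1 - lam) * (enorm' (rkmaIter A V b x0 k ω - xhat)) ^ 2 := by
    intro ω
    set e := rkmaIter A V b x0 k ω - xhat with he
    have herange : ∃ c, e = Z.mulVec c := (hZrange e).1 (hrange k ω)
    have hstep_eq : ∀ i, rkmaIter A V b x0 (k + 1) (Fin.snoc ω i) - xhat
        = e - ((A i ⬝ᵥ e) / (A i ⬝ᵥ V i)) • V i := by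
      intro i
      have hcast : (fun j : Fin k => (Fin.snoc ω i : Fin (k+1) → Fin m) j.castSucc) = ω := by
        funext j; simp
      simp only [rkmaIter, hcast, Fin.snoc_last]
      have hb2 : b i = A i ⬝ᵥ xhat := by rw [← hb]; rfl
      have hbi : A i ⬝ᵥ rkmaIter A V b x0 k ω - b i = A i ⬝ᵥ e := by
        rw [hb2, he, dotProduct_sub]
      rw [hbi, sub_right_comm, ← he]
    have hsb := step_bound A V p hps hav D S hD hS lam e (hquad e herange)
    calc ∑ i, p i * (enorm' (rkmaIter A V b x0 (k + 1) (Fin.snoc ω i) - xhat)) ^ 2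
        = ∑ i, p i * ((e - ((A i ⬝ᵥ e) / (A i ⬝ᵥ V i)) • V i) ⬝ᵥ
            (e - ((A i ⬝ᵥ e) / (A i ⬝ᵥ V i)) • V i)) := by
          exact Finset.sum_congr rfl fun i _ => by rw [hstep_eq i, enorm'_sq]
      _ ≤ (1 - lam) * (e ⬝ᵥ e) := hsb
      _ = (1 - lam) * (enorm' e) ^ 2 := by rw [enorm'_sq]
  -- reindex the sum over (k+1)-tuples
  have key : ∑ ω' : Fin (k + 1) → Fin m, (∏ j, p (ω' j)) *
        (enorm' (rkmaIter A V b x0 (k + 1) ω' - xhat)) ^ 2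
      = ∑ ω : Fin k → Fin m, (∏ j, p (ω j)) * ∑ i : Fin m,
          p i * (enorm' (rkmaIter A V b x0 (k + 1) (Fin.snoc ω i) - xhat)) ^ 2 := by
    rw [← Equiv.sum_comp (Fin.snocEquiv (fun _ => Fin m))
        (fun ω' => (∏ j, p (ω' j)) * (enorm' (rkmaIter A V b x0 (k + 1) ω' - xhat)) ^ 2),
      Fintype.sum_prod_type, Finset.sum_comm]
    refine Finset.sum_congr rfl fun ω _ => ?_
    rw [Finset.mul_sum]
    refine Finset.sum_congr rfl fun i _ => ?_
    have h0 : (Fin.snocEquiv (fun _ => Fin m)) (i, ω) = Fin.snoc ω i := rfl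
    rw [h0, Fin.prod_univ_castSucc]
    simp only [Fin.snoc_castSucc, Fin.snoc_last]
    ring
  rw [key, Finset.mul_sum]
  refine Finset.sum_le_sum fun ω _ => ?_
  have hw : (0 : ℝ) ≤ ∏ j, p (ω j) :=
    Finset.prod_nonneg fun j _ => (hp (ω j)).le
  calc (∏ j, p (ω j)) * ∑ i : Fin m,
        p i * (enorm' (rkmaIter A V b x0 (k + 1) (Fin.snoc ω i) - xhat)) ^ 2
      ≤ (∏ j, p (ω j)) * ((1 - lam) * (enorm' (rkmaIter A V b x0 k ω - xhat)) ^ 2) :=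
        mul_le_mul_of_nonneg_left (hstep ω) hw
    _ = (1 - lam) * ((∏ j, p (ω j)) * (enorm' (rkmaIter A V b x0 k ω - xhat)) ^ 2) := by
        ring
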